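/- For any vector x in R^D with ||x||_2 ≤ U < 1 and query q in R^D with ||q||_2 = 1, defining P(x) = [x; ||x||_2^2; ||x||_2^4; ...; ||x||_2^{2^m}] and Q(q) = [q; 1/2; 1/2; ...; 1/2] (appending m entries each), we have ||Q(q) - P(x)||_2^2 = (1 + m/4) - 2 q^T x + ||x||_2^{2^{m+1}}. -/

import Mathlib

noncomputable def alshP (D m : ℕ) (x : EuclideanSpace ℝ (Fin D)) :
    EuclideanSpace ℝ (Fin (D + m)) :=
  WithLp.toLp 2 (fun i => (Fin.addCases (fun j => x j) (fun j => ‖x‖ ^ (2 ^ (j.val + 1))) i : ℝ))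

noncomputable def alshQ (D m : ℕ) (q : EuclideanSpace ℝ (Fin D)) :
    EuclideanSpace ℝ (Fin (D + m)) :=
  WithLp.toLp 2 (fun i => (Fin.addCases (fun j => q j) (fun _ => 1 / 2) i : ℝ))

lemma alsh_tele (t : ℝ) (m : ℕ) :
    ∑ j ∈ Finset.range m, (1 / 2 - t ^ (2 ^ (j + 1))) ^ 2
      = (m : ℝ) / 4 - t ^ 2 + t ^ (2 ^ (m + 1)) := by
  have h : ∀ j, (1 / 2 - t ^ (2 ^ (j + 1))) ^ 2
      = 1 / 4 + (t ^ (2 ^ ((j + 1) + 1)) - t ^ (2 ^ (j + 1))) := by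
    intro j
    have h2 : t ^ (2 ^ ((j + 1) + 1)) = (t ^ (2 ^ (j + 1))) ^ 2 := by
      rw [← pow_mul, pow_succ]
    rw [h2]; ring
  simp only [h, Finset.sum_add_distrib, Finset.sum_range_sub (fun j => t ^ (2 ^ (j + 1))),
    Finset.sum_const, Finset.card_range, nsmul_eq_mul]
  ring

theorem alsh_key_equality (D m : ℕ) (hm : 1 ≤ m) (U : ℝ)
    (x q : EuclideanSpace ℝ (Fin D)) (hx : ‖x‖ ≤ U) (hU : U < 1) (hq : ‖q‖ = 1) :
    ‖alshQ D m q - alshP D m x‖ ^ 2 =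
      (1 + (m : ℝ) / 4) - 2 * (∑ i, q i * x i) + ‖x‖ ^ (2 ^ (m + 1)) := by
  have hnorm : ‖alshQ D m q - alshP D m x‖ ^ 2
      = ∑ i, (alshQ D m q i - alshP D m x i) ^ 2 := by
    rw [EuclideanSpace.norm_eq, Real.sq_sqrt (by positivity)]
    simp [Real.norm_eq_abs, sq_abs]
  rw [hnorm, Fin.sum_univ_add]
  have hP1 : ∀ j : Fin D, alshP D m x (Fin.castAdd m j) = x j := fun j => by
    simp [alshP]
  have hP2 : ∀ j : Fin m, alshP D m x (Fin.natAdd D j) = ‖x‖ ^ (2 ^ (j.val + 1)) :=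
    fun j => by simp [alshP]
  have hQ1 : ∀ j : Fin D, alshQ D m q (Fin.castAdd m j) = q j := fun j => by
    simp [alshQ]
  have hQ2 : ∀ j : Fin m, alshQ D m q (Fin.natAdd D j) = 1 / 2 := fun j => by
    simp [alshQ]
  simp only [hP1, hP2, hQ1, hQ2]
  have hsum1 : ∑ j : Fin D, (q j - x j) ^ 2
      = ‖q‖ ^ 2 - 2 * (∑ i, q i * x i) + ‖x‖ ^ 2 := by
    have hqn : ‖q‖ ^ 2 = ∑ i, q i ^ 2 := by
      rw [EuclideanSpace.norm_eq, Real.sq_sqrt (by positivity)]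
      simp [Real.norm_eq_abs, sq_abs]
    have hxn : ‖x‖ ^ 2 = ∑ i, x i ^ 2 := by
      rw [EuclideanSpace.norm_eq, Real.sq_sqrt (by positivity)]
      simp [Real.norm_eq_abs, sq_abs]
    rw [hqn, hxn, Finset.mul_sum, ← Finset.sum_sub_distrib, ← Finset.sum_add_distrib]
    exact Finset.sum_congr rfl fun i _ => by ring
  have hsum2 : ∑ j : Fin m, (1 / 2 - ‖x‖ ^ (2 ^ (j.val + 1))) ^ 2
      = (m : ℝ) / 4 - ‖x‖ ^ 2 + ‖x‖ ^ (2 ^ (m + 1)) := by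
    rw [Fin.sum_univ_eq_sum_range (fun j => (1 / 2 - ‖x‖ ^ (2 ^ (j + 1))) ^ 2) m]
    exact alsh_tele ‖x‖ m
  rw [hsum1, hsum2, hq]; ring
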